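/- Let φ ∈ k[x₀,…,x₄] be a homogeneous polynomial of degree s that lies in the ideal (x₀, x₁)^{s−2}, written as φ = Σ_{i=0}^{s−2} Q_i(x₀,…,x₄)·x₀^i·x₁^{s−2−i} with each Q_i homogeneous quadratic. If a point x = (0 : 0 : x₂ : x₃ : x₄) satisfies Σ_{i=0}^{s−2} Q_i(αx₁, x₁, x₂, x₃, x₄)·α^i = 0 for all α ∈ k and x₁ arbitrary — equivalently Q_i(x) = 0 for all i — then all partial derivatives of φ of order ≤ s−2 vanish at x. -/

import Mathlib

open MvPolynomial

private lemma foldl_pderiv_zero (k : Type*) [Field k] (v : List (Fin 5)) :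
    v.foldl (fun q j => pderiv j q) (0 : MvPolynomial (Fin 5) k) = 0 := by
  induction v with
  | nil => rfl
  | cons j t ih => simpa using ih

private lemma foldl_pderiv_add (k : Type*) [Field k] (v : List (Fin 5)) :
    ∀ p q : MvPolynomial (Fin 5) k,
      v.foldl (fun q j => pderiv j q) (p + q)
        = v.foldl (fun q j => pderiv j q) p + v.foldl (fun q j => pderiv j q) q := by
  induction v with
  | nil => intro p q; rfl
  | cons j t ih => intro p q; simpa [map_add] using ih _ _

private lemma foldl_pderiv_C_mul (k : Type*) [Field k] (v : List (Fin 5)) :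
    ∀ (c : k) (p : MvPolynomial (Fin 5) k),
      v.foldl (fun q j => pderiv j q) (C c * p)
        = C c * v.foldl (fun q j => pderiv j q) p := by
  induction v with
  | nil => intro c p; rfl
  | cons j t ih => intro c p; simpa [pderiv_C_mul] using ih c _

theorem stmt16 (k : Type*) [Field k] [CharZero k] [IsAlgClosed k]
    (s : ℕ) (hs : 4 ≤ s)
    (φ : MvPolynomial (Fin 5) k) (hφ : φ.IsHomogeneous s)
    (Q : ℕ → MvPolynomial (Fin 5) k)
    (hQ : ∀ i ∈ Finset.range (s - 1), (Q i).IsHomogeneous 2)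
    (hsum : φ = ∑ i ∈ Finset.range (s - 1), Q i * X 0 ^ i * X 1 ^ (s - 2 - i))
    (x : Fin 5 → k) (hx0 : x 0 = 0) (hx1 : x 1 = 0)
    (hQx : ∀ i ∈ Finset.range (s - 1), eval x (Q i) = 0) :
    ∀ v : List (Fin 5), v.length ≤ s - 2 →
      eval x (v.foldl (fun q j => pderiv j q) φ) = 0 := by
  have key : ∀ (v : List (Fin 5)) (q : MvPolynomial (Fin 5) k) (a b : ℕ),
      v.length ≤ a + b → (v.length = a + b → eval x q = 0) →
      eval x (v.foldl (fun q j => pderiv j q) (q * X 0 ^ a * X 1 ^ b)) = 0 := by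
    intro v
    induction v with
    | nil =>
      intro q a b _ heq
      simp only [List.foldl_nil, map_mul, map_pow, eval_X]
      rcases Nat.eq_zero_or_pos a with ha | ha
      · rcases Nat.eq_zero_or_pos b with hb | hb
        · subst ha; subst hb; simpa using heq rfl
        · simp [hx1, zero_pow hb.ne']
      · simp [hx0, zero_pow ha.ne']
    | cons j t ih =>
      intro q a b hlen heq
      simp only [List.foldl_cons]
      have expand : pderiv j (q * X 0 ^ a * X 1 ^ b)
          = pderiv j q * X 0 ^ a * X 1 ^ b
            + (q * ((a : MvPolynomial (Fin 5) k) * X 0 ^ (a - 1) * pderiv j (X 0))) * X 1 ^ b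
            + (q * X 0 ^ a) * ((b : MvPolynomial (Fin 5) k) * X 1 ^ (b - 1) * pderiv j (X 1)) := by
        rw [pderiv_mul, pderiv_mul, pderiv_pow, pderiv_pow]
        ring
      rw [expand, foldl_pderiv_add, foldl_pderiv_add, map_add, map_add]
      have hT1 : eval x (t.foldl (fun q j => pderiv j q) (pderiv j q * X 0 ^ a * X 1 ^ b)) = 0 := by
        apply ih _ a b (by simp at hlen ⊢; omega)
        intro h; exfalso; simp at hlen h; omega
      have hT2 : eval x (t.foldl (fun q j => pderiv j q)
          ((q * ((a : MvPolynomial (Fin 5) k) * X 0 ^ (a - 1) * pderiv j (X 0))) * X 1 ^ b)) = 0 := by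
        rcases Nat.eq_zero_or_pos a with ha | ha
        · subst ha
          simp only [Nat.cast_zero, zero_mul, mul_zero]
          rw [foldl_pderiv_zero]
          simp
        · rcases eq_or_ne j 0 with hj | hj
          · subst hj
            rw [pderiv_X_self]
            have : q * ((a : MvPolynomial (Fin 5) k) * X 0 ^ (a - 1) * 1) * X 1 ^ b
                = C (a : k) * (q * X 0 ^ (a - 1) * X 1 ^ b) := by
              rw [← MvPolynomial.C_eq_coe_nat]; ring
            rw [this, foldl_pderiv_C_mul, map_mul]
            have : eval x (t.foldl (fun q j => pderiv j q) (q * X 0 ^ (a - 1) * X 1 ^ b)) = 0 := by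
              apply ih q (a - 1) b (by simp at hlen ⊢; omega)
              intro h
              apply heq
              simp at h hlen ⊢; omega
            rw [this, mul_zero]
          · rw [pderiv_X_of_ne (by exact fun h => hj h.symm)]
            simp only [mul_zero, zero_mul]
            rw [foldl_pderiv_zero]
            simp
      have hT3 : eval x (t.foldl (fun q j => pderiv j q)
          ((q * X 0 ^ a) * ((b : MvPolynomial (Fin 5) k) * X 1 ^ (b - 1) * pderiv j (X 1)))) = 0 := by
        rcases Nat.eq_zero_or_pos b with hb | hb
        · subst hb
          simp only [Nat.cast_zero, zero_mul, mul_zero]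
          rw [foldl_pderiv_zero]
          simp
        · rcases eq_or_ne j 1 with hj | hj
          · subst hj
            rw [pderiv_X_self]
            have : q * X 0 ^ a * ((b : MvPolynomial (Fin 5) k) * X 1 ^ (b - 1) * 1)
                = C (b : k) * (q * X 0 ^ a * X 1 ^ (b - 1)) := by
              rw [← MvPolynomial.C_eq_coe_nat]; ring
            rw [this, foldl_pderiv_C_mul, map_mul]
            have : eval x (t.foldl (fun q j => pderiv j q) (q * X 0 ^ a * X 1 ^ (b - 1))) = 0 := by
              apply ih q a (b - 1) (by simp at hlen ⊢; omega)
              intro h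
              apply heq
              simp at h hlen ⊢; omega
            rw [this, mul_zero]
          · rw [pderiv_X_of_ne (by exact fun h => hj h.symm)]
            simp only [mul_zero]
            rw [foldl_pderiv_zero]
            simp
      rw [hT1, hT2, hT3]; ring
  intro v hv
  subst hsum
  have hfold : ∀ (F : Finset ℕ) (f : ℕ → MvPolynomial (Fin 5) k),
      v.foldl (fun q j => pderiv j q) (∑ i ∈ F, f i)
        = ∑ i ∈ F, v.foldl (fun q j => pderiv j q) (f i) := by
    intro F f
    induction F using Finset.induction with
    | empty => simp [foldl_pderiv_zero]
    | insert _ _ hnot ih =>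
      rw [Finset.sum_insert hnot, Finset.sum_insert hnot, foldl_pderiv_add, ih]
  rw [hfold, map_sum]
  apply Finset.sum_eq_zero
  intro i hi
  have hi' : i ≤ s - 2 := by
    have := Finset.mem_range.mp hi; omega
  apply key v (Q i) i (s - 2 - i) (by omega)
  intro _; exact hQx i hi
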